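/- Let L be a finite atomistic lattice. Then the simplicial complex 𝒯_L = (At(L), T_L) is boolean representable: every A ∈ T_L is a transversal of the successive differences for some chain of flats of 𝒯_L. -/

import Mathlib

universe u v

/-- `F ⊆ V` is a flat of the simplicial complex `(V, H)`: for every `I ∈ H` with
`I ⊆ F` and every `p ∈ V \ F`, `I ∪ {p} ∈ H`. -/
def IsCFlat {α : Type u} (V : Set α) (H : Set (Set α)) (F : Set α) : Prop :=
  F ⊆ V ∧ ∀ I ∈ H, I ⊆ F → ∀ p ∈ V \ F, insert p I ∈ H

/-- `(V, H)` is a finite simplicial complex: `V` is finite and nonempty, and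
`H ⊆ 2^V` is nonempty and closed under taking subsets. -/
def IsCpx {α : Type u} (V : Set α) (H : Set (Set α)) : Prop :=
  V.Finite ∧ V.Nonempty ∧ H.Nonempty ∧ (∀ X ∈ H, X ⊆ V) ∧ ∀ X ∈ H, ∀ Y ⊆ X, Y ∈ H

/-- `X` is a transversal of the successive differences for some chain
`F 0 ⊂ F 1 ⊂ … ⊂ F k` of flats of `(V, H)`: `X` admits an enumeration
`x 0, …, x (k-1)` with `x i ∈ F (i+1) \ F i`. -/
def TransvSD {α : Type u} (V : Set α) (H : Set (Set α)) (X : Set α) : Prop :=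
  ∃ (k : ℕ) (F : Fin (k + 1) → Set α) (x : Fin k → α),
    (∀ i, IsCFlat V H (F i)) ∧ StrictMono F ∧
    Function.Injective x ∧ X = Set.range x ∧
    ∀ i : Fin k, x i ∈ F i.succ \ F i.castSucc

/-- `(V, H)` is boolean representable: every `X ∈ H` is a transversal of the
successive differences for some chain of flats of `(V, H)`. -/
def BoolRep {α : Type u} (V : Set α) (H : Set (Set α)) : Prop :=
  ∀ X ∈ H, TransvSD V H X

/-- `xξ` : the set of atoms of `L` lying below `x`. -/
def latxi (L : Type u) [Lattice L] [OrderBot L] (x : L) : Set L :=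
  {a | IsAtom a ∧ a ≤ x}

/-- `T_L` : the set of transversals of chains in `L`, i.e. sets of atoms `A`
admitting an enumeration `e 0, …, e (m-1)` and a chain `c 0 < … < c m` in `L`
with `e i ∈ (c (i+1))ξ \ (c i)ξ`. -/
def TLat (L : Type u) [Lattice L] [OrderBot L] : Set (Set L) :=
  {A | ∃ (m : ℕ) (c : Fin (m + 1) → L) (e : Fin m → L), StrictMono c ∧
      Function.Injective e ∧ A = Set.range e ∧
      ∀ i : Fin m, e i ∈ latxi L (c i.succ) \ latxi L (c i.castSucc)}

/-- A lattice is atomistic if every element is a join of atoms. -/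
def AtomisticLat (L : Type u) [Lattice L] [OrderBot L] : Prop :=
  ∀ x : L, ∃ s : Finset L, (∀ a ∈ s, IsAtom a) ∧ x = s.sup id

lemma range_snoc' {α : Type u} {m : ℕ} (f : Fin m → α) (a : α) :
    Set.range (Fin.snoc f a : Fin (m+1) → α) = insert a (Set.range f) := by
  ext y
  simp only [Set.mem_range, Set.mem_insert_iff]
  constructor
  · rintro ⟨i, rfl⟩
    induction i using Fin.lastCases with
    | last => left; simp
    | cast j => right; exact ⟨j, by simp⟩
  · rintro (rfl | ⟨j, rfl⟩)
    · exact ⟨Fin.last m, by simp⟩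
    · exact ⟨j.castSucc, by simp⟩

lemma snoc_inj' {α : Type u} {m : ℕ} {f : Fin m → α} {a : α}
    (hf : Function.Injective f) (ha : a ∉ Set.range f) :
    Function.Injective (Fin.snoc f a : Fin (m+1) → α) := by
  intro i j hij
  induction i using Fin.lastCases with
  | last =>
    induction j using Fin.lastCases with
    | last => rfl
    | cast j => simp only [Fin.snoc_last, Fin.snoc_castSucc] at hij
                exact absurd ⟨_, hij.symm⟩ ha
  | cast i =>
    induction j using Fin.lastCases with
    | last => simp only [Fin.snoc_last, Fin.snoc_castSucc] at hij
              exact absurd ⟨_, hij⟩ ha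
    | cast j => simp only [Fin.snoc_castSucc] at hij
                exact congrArg Fin.castSucc (hf hij)

lemma latxi_isFlat (L : Type u) [Lattice L] [OrderBot L] (x : L) :
    IsCFlat {a : L | IsAtom a} (TLat L) (latxi L x) := by
  constructor
  · intro a ha; exact ha.1
  · rintro I ⟨m, c, e, hc, he, rfl, hmem⟩ hIx p hp
    obtain ⟨hpAtom, hpx⟩ : IsAtom p ∧ ¬(IsAtom p ∧ p ≤ x) := ⟨hp.1, hp.2⟩
    have hpnx : ¬ p ≤ x := fun h => hpx ⟨hpAtom, h⟩
    -- the meet chain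
    set d : Fin (m+1) → L := fun i => c i ⊓ x with hd
    have hex : ∀ i : Fin m, e i ≤ x := fun i => (hIx ⟨i, rfl⟩).2
    have hed : ∀ i : Fin m, e i ≤ d i.succ :=
      fun i => le_inf (hmem i).1.2 (hex i)
    have hend : ∀ i : Fin m, ¬ e i ≤ d i.castSucc :=
      fun i h => (hmem i).2 ⟨(hmem i).1.1, h.trans inf_le_left⟩
    refine ⟨m + 1, Fin.snoc d (d (Fin.last m) ⊔ p), Fin.snoc e p, ?_, ?_, ?_, ?_⟩
    · rw [Fin.strictMono_iff_lt_succ]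
      intro i
      induction i using Fin.lastCases with
      | last =>
        rw [Fin.succ_last, Fin.snoc_castSucc, Fin.snoc_last]
        exact left_lt_sup.mpr (fun h => hpnx (h.trans inf_le_right))
      | cast j =>
        rw [Fin.succ_castSucc, Fin.snoc_castSucc, Fin.snoc_castSucc]
        refine lt_of_le_of_ne (inf_le_inf_right x (hc (Fin.castSucc_lt_succ (i := j))).le) ?_
        intro hEq
        exact hend j (hEq ▸ hed j)
    · have hpr : p ∉ Set.range e := fun ⟨i, hi⟩ => hpx (hi ▸ hIx ⟨i, rfl⟩)
      exact snoc_inj' he hpr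
    · rw [range_snoc']
    · intro i
      induction i using Fin.lastCases with
      | last =>
        rw [Fin.snoc_last, Fin.succ_last, Fin.snoc_last, Fin.snoc_castSucc]
        exact ⟨⟨hpAtom, le_sup_right⟩, fun h => hpnx (h.2.trans inf_le_right)⟩
      | cast j =>
        rw [Fin.snoc_castSucc, Fin.succ_castSucc, Fin.snoc_castSucc, Fin.snoc_castSucc]
        exact ⟨⟨(hmem j).1.1, hed j⟩, fun h => hend j h.2⟩

lemma le_of_latxi_subset {L : Type u} [Lattice L] [OrderBot L]
    (hA : AtomisticLat L) {y z : L} (h : latxi L y ⊆ latxi L z) : y ≤ z := by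
  obtain ⟨s, hs, rfl⟩ := hA y
  refine Finset.sup_le fun a ha => ?_
  exact (h ⟨hs a ha, Finset.le_sup (f := id) ha⟩).2


theorem stmt11 (L : Type u) [Lattice L] [Fintype L] [OrderBot L]
    (hA : AtomisticLat L) :
    BoolRep {a : L | IsAtom a} (TLat L) := by
  rintro A ⟨m, c, e, hc, he, rfl, hmem⟩
  refine ⟨m, fun i => latxi L (c i), e, fun i => latxi_isFlat L (c i), ?_, he, rfl, hmem⟩
  intro i j hij
  refine lt_of_le_of_ne (fun a ha => ⟨ha.1, ha.2.trans (hc hij).le⟩) ?_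
  intro hEq
  exact absurd (le_antisymm (hc hij).le (le_of_latxi_subset hA (le_of_eq hEq.symm)))
    (hc hij).ne
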